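/- Let φ : ℝ^d × ℝ^d → [0,∞] be measurable, β > 0 and z > 0. Assume (A2): S := sup_{x∈ℝ^d} ∫_{ℝ^d} (1 − e^{−βφ(x,y)}) dy < ∞, and (A3): S = lim_{a→0⁺} sup_{x∈ℝ^d} ∫_{ℝ^d} Ψ_a(x,y) dy. If z·S < 1, then there exists a > 0 such that sup_{i∈ℤ^d} Σ_{j∈ℤ^d, j≠i} z · sup_{y ∈ Λ_{a,j}} ∫_{Λ_{a,i}} (1 − e^{−βφ(x,y)}) dx < 1; in other words, the Dobrushin condition holds at some positive mesh size a. -/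

import Mathlib

open MeasureTheory ENNReal

/-- The half-open cube `Λ_{a,j} = a j + (−a/2, a/2]^d` of side `a` centred at `a j`. -/
def cube (d : ℕ) (a : ℝ) (j : Fin d → ℤ) : Set (EuclideanSpace ℝ (Fin d)) :=
  {x | ∀ k : Fin d, x k - a * (j k : ℝ) ∈ Set.Ioc (-(a / 2)) (a / 2)}

/-- `expNegE t = e^{−t}` for `t ∈ [0,∞]` as an element of `[0,∞]`, with `e^{−∞} = 0`. -/
noncomputable def expNegE (t : ℝ≥0∞) : ℝ≥0∞ :=
  if t = ∞ then 0 else ENNReal.ofReal (Real.exp (-t.toReal))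

/-- The Mayer function `(x,y) ↦ 1 − e^{−βφ(x,y)}`, valued in `[0,∞]` (in fact `[0,1]`). -/
noncomputable def mayer {d : ℕ}
    (φ : EuclideanSpace ℝ (Fin d) → EuclideanSpace ℝ (Fin d) → ℝ≥0∞) (β : ℝ)
    (x y : EuclideanSpace ℝ (Fin d)) : ℝ≥0∞ :=
  1 - expNegE (ENNReal.ofReal β * φ x y)

/-- The discretised Mayer majorant
`Ψ_a(x,y) = Σ_{j∈ℤ^d} 1_{y ∈ Λ_{a,j}} · sup_{y' ∈ Λ_{a,j}} (1 − e^{−βφ(x,y')})`. -/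
noncomputable def Psi {d : ℕ}
    (φ : EuclideanSpace ℝ (Fin d) → EuclideanSpace ℝ (Fin d) → ℝ≥0∞) (β : ℝ) (a : ℝ)
    (x y : EuclideanSpace ℝ (Fin d)) : ℝ≥0∞ :=
  ∑' j : Fin d → ℤ,
    (cube d a j).indicator (fun _ => ⨆ y' ∈ cube d a j, mayer φ β x y') y

lemma cube_eq (d : ℕ) (a : ℝ) (j : Fin d → ℤ) :
    cube d a j = ((MeasurableEquiv.toLp 2 (Fin d → ℝ)).symm) ⁻¹'
      (Set.univ.pi fun k => Set.Ioc (a * (j k : ℝ) - a / 2) (a * (j k : ℝ) + a / 2)) := by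
  ext x
  simp only [cube, Set.mem_setOf_eq, Set.mem_preimage, Set.mem_pi, Set.mem_univ, true_implies,
    Set.mem_Ioc]
  refine forall_congr' fun k => ?_
  have : ((MeasurableEquiv.toLp 2 (Fin d → ℝ)).symm) x k = x k := rfl
  rw [this]
  constructor <;> intro h <;> constructor <;> linarith [h.1, h.2]

lemma cube_measurable (d : ℕ) (a : ℝ) (j : Fin d → ℤ) : MeasurableSet (cube d a j) := by
  rw [cube_eq]
  exact ((MeasurableEquiv.toLp 2 (Fin d → ℝ)).symm).measurable
    (MeasurableSet.univ_pi fun k => measurableSet_Ioc)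

lemma cube_volume (d : ℕ) (a : ℝ) (j : Fin d → ℤ) :
    volume (cube d a j) = ENNReal.ofReal a ^ d := by
  rw [cube_eq, (EuclideanSpace.volume_preserving_symm_measurableEquiv_toLp (Fin d)).measure_preimage
    (MeasurableSet.univ_pi fun k => measurableSet_Ioc).nullMeasurableSet]
  rw [volume_pi_pi]
  simp only [Real.volume_Ioc]
  have : ∀ k : Fin d, ENNReal.ofReal (a * (j k : ℝ) + a / 2 - (a * (j k : ℝ) - a / 2))
      = ENNReal.ofReal a := by intro k; ring_nf
  simp only [this, Finset.prod_const, Finset.card_univ, Fintype.card_fin]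

/-- Unconditional superadditivity of the lower Lebesgue integral for countable sums. -/
lemma tsum_lintegral_le {α ι : Type*} [Countable ι] [MeasurableSpace α] (μ : Measure α)
    (f : ι → α → ℝ≥0∞) : ∑' i, ∫⁻ a, f i a ∂μ ≤ ∫⁻ a, ∑' i, f i a ∂μ := by
  classical
  have hfin : ∀ s : Finset ι, ∑ i ∈ s, ∫⁻ a, f i a ∂μ ≤ ∫⁻ a, ∑ i ∈ s, f i a ∂μ := by
    intro s
    induction s using Finset.induction_on with
    | empty => simp
    | @insert _ _ h ih =>
      rw [Finset.sum_insert h]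
      simp_rw [Finset.sum_insert h]
      exact le_trans (add_le_add le_rfl ih) (le_lintegral_add _ _)
  rw [ENNReal.tsum_eq_iSup_sum]
  refine iSup_le fun s => (hfin s).trans (lintegral_mono fun a => ?_)
  exact ENNReal.sum_le_tsum s

lemma lintegral_Psi {d : ℕ}
    (φ : EuclideanSpace ℝ (Fin d) → EuclideanSpace ℝ (Fin d) → ℝ≥0∞) (β a : ℝ)
    (x : EuclideanSpace ℝ (Fin d)) :
    ∫⁻ y, Psi φ β a x y =
      ENNReal.ofReal a ^ d * ∑' j : Fin d → ℤ, ⨆ y' ∈ cube d a j, mayer φ β x y' := by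
  unfold Psi
  rw [lintegral_tsum fun j =>
    (measurable_const.indicator (cube_measurable d a j)).aemeasurable]
  rw [← ENNReal.tsum_mul_left]
  refine tsum_congr fun j => ?_
  rw [lintegral_indicator (cube_measurable d a j), setLIntegral_const, cube_volume, mul_comm]

/-- Analytic core of the uniqueness theorem: under (A2) (finite uniform Mayer integral)
and (A3) (the uniform integral of `Ψ_a` converges to that of the Mayer function as the
mesh `a → 0⁺`), the explicit condition `z·S < 1` guarantees that the Dobrushin one-site
sum is strictly below `1` at some positive mesh size `a`. -/
theorem dobrushin_condition_of_explicit_bound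
    {d : ℕ} (φ : EuclideanSpace ℝ (Fin d) → EuclideanSpace ℝ (Fin d) → ℝ≥0∞)
    (hφ : Measurable (Function.uncurry φ))
    {β : ℝ} (hβ : 0 < β) {z : ℝ} (hz : 0 < z)
    (hA2 : (⨆ x : EuclideanSpace ℝ (Fin d), ∫⁻ y, mayer φ β x y) ≠ ∞)
    (hA3 : Filter.Tendsto
      (fun a : ℝ => ⨆ x : EuclideanSpace ℝ (Fin d), ∫⁻ y, Psi φ β a x y)
      (nhdsWithin 0 (Set.Ioi 0))
      (nhds (⨆ x : EuclideanSpace ℝ (Fin d), ∫⁻ y, mayer φ β x y)))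
    (hzS : ENNReal.ofReal z * (⨆ x : EuclideanSpace ℝ (Fin d), ∫⁻ y, mayer φ β x y) < 1) :
    ∃ a : ℝ, 0 < a ∧
      (⨆ i : Fin d → ℤ, ∑' j : {j : Fin d → ℤ // j ≠ i},
        ENNReal.ofReal z *
          ⨆ y ∈ cube d a (j : Fin d → ℤ), ∫⁻ x in cube d a i, mayer φ β x y) < 1 := by
  -- find a good mesh size
  have htend : Filter.Tendsto
      (fun a : ℝ => ENNReal.ofReal z * ⨆ x : EuclideanSpace ℝ (Fin d), ∫⁻ y, Psi φ β a x y)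
      (nhdsWithin 0 (Set.Ioi 0))
      (nhds (ENNReal.ofReal z * ⨆ x : EuclideanSpace ℝ (Fin d), ∫⁻ y, mayer φ β x y)) :=
    ENNReal.Tendsto.const_mul hA3 (Or.inr ENNReal.ofReal_ne_top)
  have hev : ∀ᶠ a in nhdsWithin (0:ℝ) (Set.Ioi 0),
      ENNReal.ofReal z * (⨆ x : EuclideanSpace ℝ (Fin d), ∫⁻ y, Psi φ β a x y) < 1 :=
    htend.eventually (Filter.Tendsto.eventually_lt_const hzS Filter.tendsto_id)
  obtain ⟨a, ha1, ha2⟩ := (hev.and (eventually_mem_nhdsWithin)).exists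
  refine ⟨a, ha2, ?_⟩
  set V : ℝ≥0∞ := ENNReal.ofReal a ^ d with hV
  -- abbreviation
  set S : (Fin d → ℤ) → EuclideanSpace ℝ (Fin d) → ℝ≥0∞ :=
    fun j x => ⨆ y' ∈ cube d a j, mayer φ β x y' with hS
  set C : ℝ≥0∞ := ⨆ x : EuclideanSpace ℝ (Fin d), ∑' j : Fin d → ℤ, S j x with hC
  have hPsiC : (⨆ x : EuclideanSpace ℝ (Fin d), ∫⁻ y, Psi φ β a x y) = V * C := by
    rw [hC, ENNReal.mul_iSup]
    exact iSup_congr fun x => lintegral_Psi φ β a x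
  -- the key bound for each i
  have key : ∀ i : Fin d → ℤ,
      (∑' j : {j : Fin d → ℤ // j ≠ i},
        ENNReal.ofReal z *
          ⨆ y ∈ cube d a (j : Fin d → ℤ), ∫⁻ x in cube d a i, mayer φ β x y)
        ≤ ENNReal.ofReal z * (V * C) := by
    intro i
    have step1 : (∑' j : {j : Fin d → ℤ // j ≠ i},
        ENNReal.ofReal z *
          ⨆ y ∈ cube d a (j : Fin d → ℤ), ∫⁻ x in cube d a i, mayer φ β x y)
        ≤ ∑' j : Fin d → ℤ,
          ENNReal.ofReal z * ⨆ y ∈ cube d a j, ∫⁻ x in cube d a i, mayer φ β x y :=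
      ENNReal.tsum_comp_le_tsum_of_injective Subtype.val_injective _
    refine step1.trans ?_
    rw [ENNReal.tsum_mul_left]
    refine mul_le_mul_right ?_ _
    -- ∑_j sup_{y ∈ Λ_j} ∫_{Λ_i} mayer ≤ V * C
    have step2 : ∀ j : Fin d → ℤ,
        (⨆ y ∈ cube d a j, ∫⁻ x in cube d a i, mayer φ β x y)
          ≤ ∫⁻ x in cube d a i, S j x := by
      intro j
      refine iSup₂_le fun y hy => lintegral_mono fun x => ?_
      exact le_iSup₂ (f := fun y' (_ : y' ∈ cube d a j) => mayer φ β x y') y hy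
    calc (∑' j : Fin d → ℤ, ⨆ y ∈ cube d a j, ∫⁻ x in cube d a i, mayer φ β x y)
        ≤ ∑' j : Fin d → ℤ, ∫⁻ x in cube d a i, S j x := ENNReal.tsum_le_tsum step2
      _ ≤ ∫⁻ x in cube d a i, ∑' j : Fin d → ℤ, S j x := tsum_lintegral_le _ _
      _ ≤ ∫⁻ _ in cube d a i, C := by
          refine lintegral_mono fun x => ?_
          exact le_iSup (fun x => ∑' j : Fin d → ℤ, S j x) x
      _ = C * volume (cube d a i) := setLIntegral_const _ _
      _ = V * C := by rw [cube_volume, mul_comm]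
    done
  calc (⨆ i : Fin d → ℤ, ∑' j : {j : Fin d → ℤ // j ≠ i},
        ENNReal.ofReal z *
          ⨆ y ∈ cube d a (j : Fin d → ℤ), ∫⁻ x in cube d a i, mayer φ β x y)
      ≤ ENNReal.ofReal z * (V * C) := iSup_le key
    _ < 1 := by rw [← hPsiC]; exact ha1
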